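/- arXiv:cond-mat/0510607 — 4 statements merged into one kernel-verified Lean document; each statement's English description precedes it below -/
import Mathlib

section
/- Let K ≥ 2 be even, N > K, and let G be the K-nearest-neighbor ring on vertices {0, 1, …, N−1}, in which vertex i is adjacent to vertex j if and only if (i − j) mod N lies in {1, …, K/2} ∪ {N − K/2, …, N − 1}. Then the eigenvalues of the coupling matrix A = −L(G) are exactly λ_j = −4 ∑_{k=1}^{K/2} sin²(jkπ/N) for j = 0, 1, …, N−1. -/
/-- Adjacency relation of the `K`-nearest-neighbor ring on `{0, 1, …, N-1}`:
vertex `i` is adjacent to vertex `j` iff `(i - j) mod N` lies in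
`{1, …, K/2} ∪ {N - K/2, …, N - 1}`. -/
def ringAdj (N K : ℕ) (i j : Fin N) : Prop :=
  (1 ≤ (i.val + N - j.val) % N ∧ (i.val + N - j.val) % N ≤ K / 2) ∨
  (N - K / 2 ≤ (i.val + N - j.val) % N ∧ (i.val + N - j.val) % N ≤ N - 1)

instance (N K : ℕ) (i j : Fin N) : Decidable (ringAdj N K i j) := by
  unfold ringAdj; infer_instance

/-- The coupling matrix `A = -L(G)` of the `K`-nearest-neighbor ring:
`a i j = 1` if `i` and `j` are adjacent (`i ≠ j`), `a i j = 0` for nonadjacent `i ≠ j`,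
and `a i i = -(degree of i)`. -/
noncomputable def ringCoupling (N K : ℕ) : Matrix (Fin N) (Fin N) ℝ :=
  fun i j =>
    if i = j then -((Finset.univ.filter (fun l : Fin N => ringAdj N K i l)).card : ℝ)
    else if ringAdj N K i j then 1 else 0


noncomputable def rE (N : ℕ) (m : ℤ) : ℂ := Complex.exp (2 * Real.pi * Complex.I / N) ^ m

lemma rE_ne (N : ℕ) (m : ℤ) : rE N m ≠ 0 := zpow_ne_zero _ (Complex.exp_ne_zero _)

lemma rE_add (N : ℕ) (a b : ℤ) : rE N (a + b) = rE N a * rE N b :=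
  zpow_add₀ (Complex.exp_ne_zero _) a b

lemma rE_eq_one_iff {N : ℕ} (hN : N ≠ 0) (m : ℤ) : rE N m = 1 ↔ (N : ℤ) ∣ m :=
  (Complex.isPrimitiveRoot_exp N hN).zpow_eq_one_iff_dvd m

lemma rE_congr {N : ℕ} (hN : N ≠ 0) {a b : ℤ} (h : (N : ℤ) ∣ a - b) : rE N a = rE N b := by
  have h1 : rE N (a - b) = 1 := (rE_eq_one_iff hN _).2 h
  have h2 := rE_add N (a - b) b
  rw [sub_add_cancel, h1, one_mul] at h2
  exact h2

lemma rE_mul_int (N : ℕ) (a b : ℤ) : rE N (a * b) = rE N a ^ b := by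
  rw [rE, rE, ← zpow_mul]

lemma rE_zero (N : ℕ) : rE N 0 = 1 := zpow_zero _

lemma rE_sum_orth {N : ℕ} (hN : N ≠ 0) (m : ℤ) :
    ∑ l : Fin N, rE N (m * l.val) = if (N : ℤ) ∣ m then (N : ℂ) else 0 := by
  have key : ∀ l : Fin N, rE N (m * l.val) = rE N m ^ (l.val) := by
    intro l
    rw [rE_mul_int, zpow_natCast]
  simp_rw [key]
  rw [Fin.sum_univ_eq_sum_range (fun l => rE N m ^ l) N]
  split_ifs with h
  · have h1 : rE N m = 1 := (rE_eq_one_iff hN m).2 h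
    simp [h1]
  · have hne : rE N m ≠ 1 := fun hc => h ((rE_eq_one_iff hN m).1 hc)
    rw [geom_sum_eq hne]
    have hNpow : rE N m ^ N = 1 := by
      have h2 : rE N m ^ (N : ℕ) = rE N (m * N) := by rw [rE_mul_int, zpow_natCast]
      rw [h2, mul_comm, rE_mul_int]
      have h3 : rE N (N : ℤ) = 1 := (rE_eq_one_iff hN _).2 dvd_rfl
      rw [h3, one_zpow]
    rw [hNpow, sub_self, zero_div]

open Polynomial Matrix in
lemma charpoly_conj_aux {n : Type*} [Fintype n] [DecidableEq n] {R : Type*} [CommRing R]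
    (W W' M : Matrix n n R) (h1 : W * W' = 1) :
    (W * M * W').charpoly = M.charpoly := by
  have hmap1 : (W.map C : Matrix n n R[X]) * W'.map C = 1 := by
    rw [← Matrix.map_mul, h1, Matrix.map_one _ (map_zero C) (map_one C)]
  have hc : charmatrix (W * M * W') = W.map C * charmatrix M * W'.map C := by
    simp only [charmatrix, RingHom.mapMatrix_apply]
    rw [mul_sub, sub_mul]
    congr 1
    · rw [← (Matrix.scalar_commute (X : R[X]) (fun r' => Commute.all _ _) (W.map C)).eq,
        Matrix.mul_assoc, hmap1, Matrix.mul_one]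
    · simp [Matrix.map_mul, Matrix.mul_assoc]
  have hdetWW' : (W.map C).det * (W'.map C).det = 1 := by
    rw [← Matrix.det_mul, hmap1, Matrix.det_one]
  rw [Matrix.charpoly, hc, Matrix.det_mul, Matrix.det_mul, Matrix.charpoly]
  calc (W.map C).det * (charmatrix M).det * (W'.map C).det
      = (charmatrix M).det * ((W.map C).det * (W'.map C).det) := by ring
    _ = (charmatrix M).det := by rw [hdetWW', mul_one]

open Polynomial in
lemma charpoly_diagonal_aux {n : Type*} [Fintype n] [DecidableEq n] {R : Type*} [CommRing R]
    (d : n → R) : (Matrix.diagonal d).charpoly = ∏ i, (X - C (d i)) := by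
  have h : Matrix.charmatrix (Matrix.diagonal d) = Matrix.diagonal (fun i => X - C (d i)) := by
    ext i j
    by_cases h : i = j
    · subst h; rw [Matrix.charmatrix_apply_eq, Matrix.diagonal_apply_eq, Matrix.diagonal_apply_eq]
    · rw [Matrix.charmatrix_apply_ne _ _ _ h, Matrix.diagonal_apply_ne _ h,
        Matrix.diagonal_apply_ne _ h, map_zero, neg_zero]
  rw [Matrix.charpoly, h, Matrix.det_diagonal]

/-- The DFT matrix. -/
noncomputable def dftW (N : ℕ) : Matrix (Fin N) (Fin N) ℂ := fun i j => rE N (i.val * j.val)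

/-- The inverse DFT matrix. -/
noncomputable def dftW' (N : ℕ) : Matrix (Fin N) (Fin N) ℂ :=
  fun i j => (N : ℂ)⁻¹ * rE N (-(i.val * j.val))

lemma dvd_iff_eq {N : ℕ} (i j : Fin N) : (N : ℤ) ∣ ((i.val : ℤ) - j.val) ↔ i = j := by
  constructor
  · intro h
    have hi := i.isLt
    have hj := j.isLt
    have : ((i.val : ℤ) - j.val) = 0 := by
      rcases h with ⟨c, hc⟩
      have hN : (0:ℤ) < N := by exact_mod_cast i.pos
      rcases lt_trichotomy c 0 with h1 | h1 | h1
      · nlinarith [Int.add_one_le_iff.mpr h1]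
      · simp [h1] at hc; omega
      · nlinarith [Int.add_one_le_iff.mpr h1]
    have : i.val = j.val := by omega
    exact Fin.ext this
  · rintro rfl
    simp

lemma dft_mul_dft' {N : ℕ} (hN : N ≠ 0) : dftW N * dftW' N = 1 := by
  ext i j
  rw [Matrix.mul_apply]
  have key : ∀ l : Fin N, dftW N i l * dftW' N l j
      = (N : ℂ)⁻¹ * rE N (((i.val : ℤ) - j.val) * l.val) := by
    intro l
    rw [dftW, dftW']
    rw [show rE N (i.val * l.val) * ((N : ℂ)⁻¹ * rE N (-(l.val * j.val)))
        = (N : ℂ)⁻¹ * (rE N (i.val * l.val) * rE N (-(l.val * j.val))) by ring,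
      ← rE_add]
    congr 2
    ring
  simp_rw [key]
  rw [← Finset.mul_sum, rE_sum_orth hN]
  by_cases h : i = j
  · subst h
    rw [if_pos ((dvd_iff_eq i i).2 rfl)]
    rw [Matrix.one_apply_eq]
    field_simp
  · rw [if_neg (fun hc => h ((dvd_iff_eq i j).1 hc)), Matrix.one_apply_ne h, mul_zero]

lemma dft'_mul_dft {N : ℕ} (hN : N ≠ 0) : dftW' N * dftW N = 1 := by
  ext i j
  rw [Matrix.mul_apply]
  have key : ∀ l : Fin N, dftW' N i l * dftW N l j
      = (N : ℂ)⁻¹ * rE N (((j.val : ℤ) - i.val) * l.val) := by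
    intro l
    rw [dftW, dftW']
    rw [show (N : ℂ)⁻¹ * rE N (-(i.val * l.val)) * rE N (l.val * j.val)
        = (N : ℂ)⁻¹ * (rE N (-(i.val * l.val)) * rE N (l.val * j.val)) by ring,
      ← rE_add]
    congr 2
    ring
  simp_rw [key]
  rw [← Finset.mul_sum, rE_sum_orth hN]
  by_cases h : i = j
  · subst h
    rw [if_pos ((dvd_iff_eq i i).2 rfl)]
    rw [Matrix.one_apply_eq]
    field_simp
  · rw [if_neg (fun hc => (Ne.symm h) ((dvd_iff_eq j i).1 hc)), Matrix.one_apply_ne h, mul_zero]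

lemma fin_sub_dvd {N : ℕ} (i d : Fin N) :
    (N : ℤ) ∣ (((i - d).val : ℤ) - ((i.val : ℤ) - d.val)) := by
  have hd : d.val ≤ N := d.isLt.le
  have h1 : ((i - d).val : ℤ) = ((i.val + (N - d.val) : ℕ) : ℤ) % N := by
    rw [Fin.sub_def]
    push_cast
    rw [add_comm]
  rw [h1]
  have h2 : ((i.val + (N - d.val) : ℕ) : ℤ) = (i.val : ℤ) - d.val + N := by
    push_cast [hd]
    ring
  rw [h2]
  have h3 : ((i.val : ℤ) - d.val + N) % N = ((i.val : ℤ) - d.val) % N := by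
    simp
  rw [h3]
  have h4 := Int.mul_ediv_add_emod ((i.val : ℤ) - d.val) N
  exact ⟨-(((i.val : ℤ) - d.val) / N), by linarith⟩

lemma term_eq {N : ℕ} (k j : ℕ) :
    rE N (-((k : ℤ) * j)) + rE N ((k : ℤ) * j) - 2
      = ((-4 * Real.sin (j * k * Real.pi / N) ^ 2 : ℝ) : ℂ) := by
  have hexp : ∀ m : ℤ, rE N m = Complex.exp (m * (2 * Real.pi * Complex.I / N)) :=
    fun m => (Complex.exp_int_mul _ m).symm
  have h1 : (((k : ℤ) * j : ℤ) : ℂ) * (2 * Real.pi * Complex.I / N)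
      = ((2 * Real.pi * (k * j) / N : ℝ) : ℂ) * Complex.I := by
    push_cast
    ring
  have h2 : ((-((k : ℤ) * j) : ℤ) : ℂ) * (2 * Real.pi * Complex.I / N)
      = ((-(2 * Real.pi * (k * j) / N) : ℝ) : ℂ) * Complex.I := by
    push_cast
    ring
  rw [hexp, hexp, h1, h2, Complex.exp_mul_I, Complex.exp_mul_I,
    ← Complex.ofReal_cos, ← Complex.ofReal_sin, ← Complex.ofReal_cos, ← Complex.ofReal_sin]
  set θ : ℝ := 2 * Real.pi * (k * j) / N with hθdef
  have h3 : (↑(Real.cos (-θ)) + ↑(Real.sin (-θ)) * Complex.I) +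
      (↑(Real.cos θ) + ↑(Real.sin θ) * Complex.I) - 2 = ((2 * Real.cos θ - 2 : ℝ) : ℂ) := by
    rw [Real.cos_neg, Real.sin_neg]
    push_cast
    ring
  rw [h3]
  congr 1
  have h4 : θ = 2 * (j * k * Real.pi / N) := by rw [hθdef]; ring
  have h5 := Real.sin_sq_eq_half_sub (j * k * Real.pi / N)
  rw [h4]
  linarith

open Finset Polynomial Matrix Fin.NatCast in
/-- Let `K ≥ 2` be even, `N > K`, and let `G` be the `K`-nearest-neighbor ring on
`{0, 1, …, N-1}`.  Then the eigenvalues of the coupling matrix `A = -L(G)` (with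
multiplicity, i.e. the roots of its characteristic polynomial) are exactly
`λ_j = -4 * ∑_{k=1}^{K/2} sin² (j k π / N)` for `j = 0, 1, …, N-1`. -/
theorem ring_coupling_matrix_eigenvalues
    {N K : ℕ} (hK : 2 ≤ K) (hKeven : Even K) (hNK : K < N) :
    (ringCoupling N K).charpoly.roots =
      (Finset.univ.val : Multiset (Fin N)).map
        (fun j => -4 * ∑ k ∈ Finset.Icc 1 (K / 2),
          Real.sin ((j : ℕ) * k * Real.pi / N) ^ 2) := by
  classical
  have hN : N ≠ 0 := by omega
  haveI : NeZero N := ⟨hN⟩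
  obtain ⟨t, ht⟩ := hKeven
  have hKK : K / 2 + K / 2 = K := by omega
  have hK2 : 1 ≤ K / 2 := by omega
  set S : Finset (Fin N) := univ.filter (fun d : Fin N =>
    (1 ≤ d.val ∧ d.val ≤ K / 2) ∨ (N - K / 2 ≤ d.val ∧ d.val ≤ N - 1)) with hSdef
  have hmemS : ∀ d : Fin N, d ∈ S ↔
      ((1 ≤ d.val ∧ d.val ≤ K / 2) ∨ (N - K / 2 ≤ d.val ∧ d.val ≤ N - 1)) := by
    intro d; simp [hSdef]
  have hadj : ∀ i l : Fin N, ringAdj N K i l ↔ (i - l) ∈ S := by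
    intro i l
    have hsub : (i.val + N - l.val) % N = (i - l).val := by
      rw [Fin.sub_def]; congr 1; omega
    rw [hmemS, ringAdj, hsub]
  have h0S : (0 : Fin N) ∉ S := by
    rw [hmemS]
    push_neg
    simp only [Fin.val_zero]
    omega
  have hdeg : ∀ i : Fin N, (univ.filter (fun l => ringAdj N K i l)).card = S.card := by
    intro i
    have himg : univ.filter (fun l => ringAdj N K i l) = S.image (fun d => i - d) := by
      ext l
      simp only [mem_filter, mem_univ, true_and, mem_image]
      constructor
      · intro h
        exact ⟨i - l, (hadj i l).1 h, by rw [sub_sub_cancel]⟩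
      · rintro ⟨d, hd, rfl⟩
        rw [hadj, sub_sub_cancel]
        exact hd
    rw [himg, Finset.card_image_of_injective _ sub_right_injective]
  set A : Matrix (Fin N) (Fin N) ℂ := (ringCoupling N K).map (algebraMap ℝ ℂ) with hA
  have hAentry : ∀ i d : Fin N, A i (i - d)
      = if d = 0 then -(S.card : ℂ) else if d ∈ S then 1 else 0 := by
    intro i d
    rw [hA, Matrix.map_apply]
    show algebraMap ℝ ℂ (ringCoupling N K i (i - d)) = _
    rw [ringCoupling]
    by_cases h0 : d = 0
    · subst h0
      rw [sub_zero, if_pos rfl, if_pos rfl, hdeg]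
      simp
    · have hne : i ≠ i - d := by
        intro hc
        exact h0 (sub_eq_self.mp hc.symm)
      rw [if_neg hne, if_neg h0]
      by_cases hd : d ∈ S
      · rw [if_pos (by rw [hadj, sub_sub_cancel]; exact hd), if_pos hd]
        simp
      · rw [if_neg (by rw [hadj, sub_sub_cancel]; exact hd), if_neg hd]
        simp
  set lamC : Fin N → ℂ := fun j => ∑ d ∈ S, (rE N (-((d.val : ℤ) * j.val)) - 1) with hlamC
  have hkey : A * dftW N = dftW N * Matrix.diagonal lamC := by
    ext i j
    rw [Matrix.mul_apply, Matrix.mul_diagonal]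
    have hre : ∀ d : Fin N, dftW N (i - d) j
        = rE N ((i.val : ℤ) * j.val) * rE N (-((d.val : ℤ) * j.val)) := by
      intro d
      rw [dftW, ← rE_add]
      apply rE_congr hN
      have h2 : (N : ℤ) ∣ (((i - d).val : ℤ) - ((i.val : ℤ) - d.val)) * j.val :=
        Dvd.dvd.mul_right (fin_sub_dvd i d) _
      convert h2 using 1
      push_cast
      ring
    have hsplit : ∑ d : Fin N,
        ((if d = 0 then -(S.card : ℂ) else if d ∈ S then 1 else 0)
          * rE N (-((d.val : ℤ) * j.val))) = lamC j := by
      rw [← Finset.sum_erase_add _ _ (mem_univ (0 : Fin N))]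
      have h0term : ((if (0 : Fin N) = 0 then -(S.card : ℂ) else if (0 : Fin N) ∈ S then 1 else 0)
          * rE N (-(((0 : Fin N).val : ℤ) * j.val))) = -(S.card : ℂ) := by
        rw [if_pos rfl]
        simp [rE_zero]
      rw [h0term]
      have herase : ∑ d ∈ univ.erase 0,
          ((if d = 0 then -(S.card : ℂ) else if d ∈ S then 1 else 0)
            * rE N (-((d.val : ℤ) * j.val)))
          = ∑ d ∈ S, rE N (-((d.val : ℤ) * j.val)) := by
        rw [show ∑ d ∈ S, rE N (-((d.val : ℤ) * j.val))
            = ∑ d ∈ (univ.erase 0).filter (· ∈ S), rE N (-((d.val : ℤ) * j.val)) by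
          congr 1
          ext d
          constructor
          · intro hd
            rw [Finset.mem_filter, Finset.mem_erase]
            exact ⟨⟨fun hc => h0S (hc ▸ hd), Finset.mem_univ d⟩, hd⟩
          · intro hd
            exact (Finset.mem_filter.mp hd).2]
        rw [Finset.sum_filter]
        apply Finset.sum_congr rfl
        intro d hd
        rw [if_neg (Finset.ne_of_mem_erase hd)]
        by_cases hdS : d ∈ S
        · rw [if_pos hdS, if_pos hdS, one_mul]
        · rw [if_neg hdS, if_neg hdS, zero_mul]
      rw [herase]
      show _ = ∑ d ∈ S, (rE N (-((d.val : ℤ) * j.val)) - 1)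
      rw [Finset.sum_sub_distrib, Finset.sum_const, nsmul_eq_mul, mul_one]
      ring
    calc ∑ l, A i l * dftW N l j
        = ∑ d, A i (i - d) * dftW N (i - d) j :=
          (Equiv.sum_comp (Equiv.subLeft i) (fun l => A i l * dftW N l j)).symm
      _ = ∑ d, (rE N ((i.val : ℤ) * j.val) *
            ((if d = 0 then -(S.card : ℂ) else if d ∈ S then 1 else 0)
              * rE N (-((d.val : ℤ) * j.val)))) := by
          apply Finset.sum_congr rfl
          intro d _
          rw [hAentry, hre]
          ring
      _ = rE N ((i.val : ℤ) * j.val) * lamC j := by rw [← Finset.mul_sum, hsplit]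
      _ = dftW N i j * lamC j := by
          rw [dftW]
  set lam : Fin N → ℝ := fun j => -4 * ∑ k ∈ Finset.Icc 1 (K / 2),
    Real.sin ((j : ℕ) * k * Real.pi / N) ^ 2 with hlamdef
  have hlam : ∀ j : Fin N, lamC j = ((lam j : ℝ) : ℂ) := by
    intro j
    have hS : S = ((Finset.Icc 1 (K / 2)).image (fun k : ℕ => (k : Fin N))) ∪
        ((Finset.Icc 1 (K / 2)).image (fun k : ℕ => ((N - k : ℕ) : Fin N))) := by
      ext d
      simp only [Finset.mem_union, Finset.mem_image, Finset.mem_Icc, hmemS]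
      constructor
      · rintro (⟨h1, h2⟩ | ⟨h1, h2⟩)
        · exact Or.inl ⟨d.val, ⟨h1, h2⟩, Fin.cast_val_eq_self d⟩
        · refine Or.inr ⟨N - d.val, ⟨by omega, by omega⟩, ?_⟩
          have hh : N - (N - d.val) = d.val := by omega
          rw [hh, Fin.cast_val_eq_self]
      · rintro (⟨k, ⟨hk1, hk2⟩, rfl⟩ | ⟨k, ⟨hk1, hk2⟩, rfl⟩)
        · left
          rw [Fin.val_cast_of_lt (by omega : k < N)]
          omega
        · right
          rw [Fin.val_cast_of_lt (by omega : N - k < N)]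
          omega
    have hval1 : ∀ k ∈ Finset.Icc 1 (K / 2), ((k : Fin N)).val = k := by
      intro k hk
      rw [Finset.mem_Icc] at hk
      exact Fin.val_cast_of_lt (by omega)
    have hval2 : ∀ k ∈ Finset.Icc 1 (K / 2), (((N - k : ℕ) : Fin N)).val = N - k := by
      intro k hk
      rw [Finset.mem_Icc] at hk
      exact Fin.val_cast_of_lt (by omega)
    have hinj1 : Set.InjOn (fun k : ℕ => (k : Fin N)) (Finset.Icc 1 (K / 2)) := by
      intro a ha b hb hab
      have := congrArg Fin.val hab
      rwa [hval1 a (Finset.mem_coe.mp ha), hval1 b (Finset.mem_coe.mp hb)] at this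
    have hinj2 : Set.InjOn (fun k : ℕ => ((N - k : ℕ) : Fin N)) (Finset.Icc 1 (K / 2)) := by
      intro a ha b hb hab
      have h := congrArg Fin.val hab
      rw [hval2 a (Finset.mem_coe.mp ha), hval2 b (Finset.mem_coe.mp hb)] at h
      have ha' := Finset.mem_Icc.mp (Finset.mem_coe.mp ha)
      have hb' := Finset.mem_Icc.mp (Finset.mem_coe.mp hb)
      omega
    have hdisj : Disjoint ((Finset.Icc 1 (K / 2)).image (fun k : ℕ => (k : Fin N)))
        ((Finset.Icc 1 (K / 2)).image (fun k : ℕ => ((N - k : ℕ) : Fin N))) := by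
      rw [Finset.disjoint_left]
      rintro a ha hb
      rw [Finset.mem_image] at ha hb
      obtain ⟨k1, hk1, rfl⟩ := ha
      obtain ⟨k2, hk2, hk⟩ := hb
      have h := congrArg Fin.val hk
      rw [hval1 k1 hk1, hval2 k2 hk2] at h
      rw [Finset.mem_Icc] at hk1 hk2
      omega
    show (∑ d ∈ S, (rE N (-((d.val : ℤ) * j.val)) - 1))
      = ((( -4 * ∑ k ∈ Finset.Icc 1 (K / 2),
          Real.sin ((j : ℕ) * k * Real.pi / N) ^ 2 : ℝ)) : ℂ)
    rw [hS, Finset.sum_union hdisj, Finset.sum_image hinj1, Finset.sum_image hinj2,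
      ← Finset.sum_add_distrib]
    rw [show ((((-4 : ℝ) * ∑ k ∈ Finset.Icc 1 (K / 2),
        Real.sin ((j : ℕ) * k * Real.pi / N) ^ 2 : ℝ)) : ℂ)
      = ∑ k ∈ Finset.Icc 1 (K / 2),
        ((-4 * Real.sin ((j : ℕ) * k * Real.pi / N) ^ 2 : ℝ) : ℂ) by
        push_cast [Finset.mul_sum]
        norm_num]
    apply Finset.sum_congr rfl
    intro k hk
    rw [hval1 k hk, hval2 k hk]
    have hkN : k ≤ N := by
      rw [Finset.mem_Icc] at hk
      omega
    have hsecond : rE N (-(((N - k : ℕ) : ℤ) * j.val)) = rE N ((k : ℤ) * j.val) := by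
      apply rE_congr hN
      refine ⟨-(j.val : ℤ), ?_⟩
      push_cast [Nat.cast_sub hkN]
      ring
    rw [hsecond, ← term_eq k j.val]
    ring
  have hAconj : A = dftW N * Matrix.diagonal lamC * dftW' N := by
    calc A = A * (dftW N * dftW' N) := by rw [dft_mul_dft' hN, Matrix.mul_one]
      _ = (A * dftW N) * dftW' N := by rw [Matrix.mul_assoc]
      _ = dftW N * Matrix.diagonal lamC * dftW' N := by rw [hkey]
  have hcp : A.charpoly = ∏ j, (X - C (lamC j)) := by
    rw [hAconj, charpoly_conj_aux _ _ _ (dft_mul_dft' hN), charpoly_diagonal_aux]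
  have hcpR : (ringCoupling N K).charpoly = ∏ j, (X - C (lam j)) := by
    apply Polynomial.map_injective (algebraMap ℝ ℂ) (algebraMap ℝ ℂ).injective
    rw [← Matrix.charpoly_map, ← hA, hcp, Polynomial.map_prod]
    apply Finset.prod_congr rfl
    intro j _
    rw [Polynomial.map_sub, Polynomial.map_X, Polynomial.map_C, hlam j]
    norm_cast
  rw [hcpR]
  have hprod : ∏ j, (X - C (lam j))
      = ((Finset.univ.val.map lam).map (fun a => X - C a)).prod := by
    rw [Multiset.map_map]
    rfl
  rw [hprod, Polynomial.roots_multiset_prod_X_sub_C]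
  try rfl
  try simp [hlamdef, Multiset.map_map]
  try exact List.Perm.refl _
end

section
/- Fix an even integer K ≥ 2. For N > K let G_N be the K-nearest-neighbor ring on N vertices (vertex i adjacent to vertex j iff (i − j) mod N ∈ {1, …, K/2} ∪ {N − K/2, …, N − 1}), and let λ2(N) denote the second-largest eigenvalue of its coupling matrix A_N = −L(G_N), i.e. the largest eigenvalue of A_N on the orthogonal complement of the all-ones vector. Then λ2(N) < 0 for every N and λ2(N) → 0 as N → ∞. Consequently, for any fixed constants c > 0 and d̄ < 0, there exists N̄ such that for all N > N̄ the synchronization criterion c > |d̄|/|λ2(N)| fails. -/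
set_option linter.unusedSectionVars false
set_option linter.unusedVariables false
set_option linter.unnecessarySimpa false
set_option linter.deprecated false

open Finset Real
open Fin.NatCast Fin.CommRing


section
variable {N K : ℕ} [NeZero N]

lemma aux_sub_val (i j : Fin N) : (i.val + N - j.val) % N = (i - j).val := by
  rw [Fin.sub_def]
  show _ = (N - j.val + i.val) % N
  congr 1
  have := j.isLt
  omega

lemma ringAdj_iff (i j : Fin N) :
    ringAdj N K i j ↔ ((1 ≤ (i - j).val ∧ (i - j).val ≤ K / 2) ∨
      (N - K / 2 ≤ (i - j).val ∧ (i - j).val ≤ N - 1)) := by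
  unfold ringAdj; rw [aux_sub_val]

lemma val_cast_lt {m : ℕ} (hm : m < N) : ((m : Fin N)).val = m := by
  simp [Fin.val_natCast, Nat.mod_eq_of_lt hm]

lemma neg_cast_val {m : ℕ} (hm1 : 1 ≤ m) (hm : m < N) :
    (-(m : Fin N)).val = N - m := by
  have h1 : ((N - m : ℕ) : Fin N) = -(m : Fin N) := by
    have : ((N - m : ℕ) : Fin N) = (N : Fin N) - (m : Fin N) := by
      push_cast [Nat.cast_sub (le_of_lt hm)]; ring
    rw [this, Fin.natCast_self]; ring
  rw [← h1, val_cast_lt (by omega)]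

lemma subAddVal (i : Fin N) {m : ℕ} (hm1 : 1 ≤ m) (hm : m < N) :
    (i - (i + (m : Fin N))).val = N - m := by
  have : i - (i + (m : Fin N)) = -(m : Fin N) := by ring
  rw [this, neg_cast_val hm1 hm]

lemma subSubVal (i : Fin N) {m : ℕ} (hm : m < N) :
    (i - (i - (m : Fin N))).val = m := by
  rw [sub_sub_cancel, val_cast_lt hm]

lemma adjFilter_eq (hK : 2 ≤ K) (hN : K < N) (i : Fin N) :
    Finset.univ.filter (fun j => ringAdj N K i j) =
      ((Finset.Icc 1 (K/2)).image (fun m : ℕ => i - (m : Fin N))) ∪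
      ((Finset.Icc 1 (K/2)).image (fun m : ℕ => i + (m : Fin N))) := by
  have hh1 : 1 ≤ K / 2 := by omega
  have hhN : K / 2 < N := by omega
  ext j
  simp only [mem_filter, mem_univ, true_and, mem_union, mem_image, mem_Icc,
    ringAdj_iff]
  constructor
  · rintro (⟨h1, h2⟩ | ⟨h1, h2⟩)
    · left
      refine ⟨(i - j).val, ⟨h1, h2⟩, ?_⟩
      rw [Fin.cast_val_eq_self, sub_sub_cancel]
    · right
      have hlt := (i - j).isLt
      refine ⟨N - (i - j).val, ⟨by omega, by omega⟩, ?_⟩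
      have : ((N - (i - j).val : ℕ) : Fin N) = -(i - j) := by
        push_cast [Nat.cast_sub (le_of_lt hlt), Fin.cast_val_eq_self]
        rw [Fin.natCast_self]; ring
      rw [this]; ring
  · rintro (⟨m, ⟨hm1, hm2⟩, rfl⟩ | ⟨m, ⟨hm1, hm2⟩, rfl⟩)
    · left
      rw [subSubVal i (by omega)]
      exact ⟨hm1, hm2⟩
    · right
      rw [subAddVal i hm1 (by omega)]
      omega

lemma adjImagesDisjoint (hK : 2 ≤ K) (hN : K < N) (i : Fin N) :
    Disjoint ((Finset.Icc 1 (K/2)).image (fun m : ℕ => i - (m : Fin N)))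
      ((Finset.Icc 1 (K/2)).image (fun m : ℕ => i + (m : Fin N))) := by
  rw [Finset.disjoint_left]
  rintro j hj hj'
  simp only [mem_image, mem_Icc] at hj hj'
  obtain ⟨m, ⟨hm1, hm2⟩, rfl⟩ := hj
  obtain ⟨m', ⟨hm1', hm2'⟩, he⟩ := hj'
  have h1 : (i - (i - (m:Fin N))).val = m := subSubVal i (by omega)
  rw [← he, subAddVal i hm1' (by omega)] at h1
  omega

lemma injSub (i : Fin N) (hN : K < N) :
    Set.InjOn (fun m : ℕ => i - (m : Fin N)) (Finset.Icc 1 (K/2)) := by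
  intro a ha b hb hab
  simp only [mem_coe, mem_Icc] at ha hb
  have hab' : i - (a:Fin N) = i - (b:Fin N) := hab
  have : (i - (i - (a:Fin N))).val = (i - (i - (b:Fin N))).val := by rw [hab']
  rwa [subSubVal i (by omega), subSubVal i (by omega)] at this

lemma injAdd (i : Fin N) (hN : K < N) :
    Set.InjOn (fun m : ℕ => i + (m : Fin N)) (Finset.Icc 1 (K/2)) := by
  intro a ha b hb hab
  simp only [mem_coe, mem_Icc] at ha hb
  have hab' : i + (a:Fin N) = i + (b:Fin N) := hab
  have : (i - (i + (a:Fin N))).val = (i - (i + (b:Fin N))).val := by rw [hab']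
  rw [subAddVal i ha.1 (by omega), subAddVal i hb.1 (by omega)] at this
  omega
end

section
variable {N K : ℕ} [NeZero N]


lemma not_adj_self (hN : K < N) (i : Fin N) : ¬ ringAdj N K i i := by
  rw [ringAdj_iff, sub_self]
  simp only [Fin.val_zero]
  omega

lemma degree_eq (hK : 2 ≤ K) (hKe : Even K) (hN : K < N) (i : Fin N) :
    (Finset.univ.filter (fun j => ringAdj N K i j)).card = K := by
  rw [adjFilter_eq hK hN i,
    Finset.card_union_of_disjoint (adjImagesDisjoint hK hN i),
    Finset.card_image_of_injOn (injSub i hN),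
    Finset.card_image_of_injOn (injAdd i hN), Nat.card_Icc]
  obtain ⟨r, hr⟩ := hKe
  omega

lemma mulVec_expand (hN : K < N) (v : Fin N → ℝ) (i : Fin N) :
    (ringCoupling N K).mulVec v i =
      -(((Finset.univ.filter (fun j => ringAdj N K i j)).card : ℝ)) * v i +
        ∑ j ∈ Finset.univ.filter (fun j => ringAdj N K i j), v j := by
  have key : ∀ j : Fin N, ringCoupling N K i j * v j =
      (if i = j then -(((Finset.univ.filter (fun l => ringAdj N K i l)).card : ℝ)) * v j else 0)
      + (if ringAdj N K i j then v j else 0) := by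
    intro j
    unfold ringCoupling
    by_cases h1 : i = j
    · subst h1
      simp [not_adj_self hN i]
    · simp only [if_neg h1]
      by_cases h2 : ringAdj N K i j <;> simp [h2]
  simp only [Matrix.mulVec, dotProduct, key, Finset.sum_add_distrib]
  rw [Finset.sum_ite_eq, Finset.sum_filter]
  simp
end

section
variable {N K : ℕ} [NeZero N]

lemma cos_mod (a : ℕ) : Real.cos (2*π*((a % N : ℕ) : ℝ)/N) = Real.cos (2*π*a/N) := by
  have hN0 : (0:ℝ) < N := by
    have := Nat.pos_of_ne_zero (NeZero.ne N); exact_mod_cast this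
  have ha : (a : ℝ) = ((a % N : ℕ) : ℝ) + ((a / N : ℕ) : ℝ) * N := by
    have h2 : ((a % N + N * (a / N) : ℕ) : ℝ) = (a : ℝ) := by
      exact_mod_cast congrArg (Nat.cast : ℕ → ℝ) (Nat.mod_add_div a N)
    push_cast at h2 ⊢
    linarith
  rw [ha]
  have : 2*π*(((a % N : ℕ) : ℝ) + ((a / N : ℕ) : ℝ) * N)/N
      = 2*π*((a % N : ℕ) : ℝ)/N + ((a / N : ℕ) : ℝ) * (2*π) := by
    field_simp
  rw [this, Real.cos_add_nat_mul_two_pi]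
end

section
variable {N K : ℕ} [NeZero N]

lemma pair_cos (i : Fin N) {m : ℕ} (hm1 : 1 ≤ m) (hm : m < N) :
    Real.cos (2*π*((i - (m : Fin N)).val : ℝ)/N) + Real.cos (2*π*((i + (m : Fin N)).val : ℝ)/N)
      = 2 * Real.cos (2*π*(i.val:ℝ)/N) * Real.cos (2*π*(m:ℝ)/N) := by
  have hN0 : (0:ℝ) < N := by
    have := Nat.pos_of_ne_zero (NeZero.ne N); exact_mod_cast this
  have hval : ((m : Fin N)).val = m := val_cast_lt hm
  have h1 : (i - (m : Fin N)).val = (N - m + i.val) % N := by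
    rw [Fin.sub_def, hval]
  have h2 : (i + (m : Fin N)).val = (i.val + m) % N := by
    rw [Fin.add_def, hval]
  rw [h1, h2, cos_mod, cos_mod]
  set x : ℝ := 2*π*(i.val:ℝ)/N with hx
  set y : ℝ := 2*π*(m:ℝ)/N with hy
  have e1 : 2*π*((N - m + i.val : ℕ):ℝ)/N = (x - y) + 2*π := by
    rw [hx, hy]
    push_cast [Nat.cast_sub (le_of_lt hm)]
    field_simp
    ring
  have e2 : 2*π*((i.val + m : ℕ):ℝ)/N = x + y := by
    rw [hx, hy]; push_cast; field_simp
  rw [e1, e2, Real.cos_add_two_pi, Real.cos_sub, Real.cos_add]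
  ring

lemma eigen_eq (hK : 2 ≤ K) (hKe : Even K) (hN : K < N) :
    (ringCoupling N K).mulVec (fun j : Fin N => Real.cos (2*π*(j.val:ℝ)/N)) =
      (∑ m ∈ Finset.Icc 1 (K/2), (2*Real.cos (2*π*(m:ℝ)/N) - 2)) •
        (fun j : Fin N => Real.cos (2*π*(j.val:ℝ)/N)) := by
  funext i
  rw [Pi.smul_apply, smul_eq_mul]
  rw [mulVec_expand hN, degree_eq hK hKe hN, adjFilter_eq hK hN,
    Finset.sum_union (adjImagesDisjoint hK hN i),
    Finset.sum_image (fun a ha b hb => injSub i hN (Finset.mem_coe.2 ha) (Finset.mem_coe.2 hb)),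
    Finset.sum_image (fun a ha b hb => injAdd i hN (Finset.mem_coe.2 ha) (Finset.mem_coe.2 hb))]
  rw [← Finset.sum_add_distrib]
  have hsum : ∑ m ∈ Finset.Icc 1 (K/2),
      (Real.cos (2*π*((i - (m : Fin N)).val : ℝ)/N) + Real.cos (2*π*((i + (m : Fin N)).val : ℝ)/N))
      = ∑ m ∈ Finset.Icc 1 (K/2), 2 * Real.cos (2*π*(i.val:ℝ)/N) * Real.cos (2*π*(m:ℝ)/N) := by
    apply Finset.sum_congr rfl
    intro m hm
    rw [Finset.mem_Icc] at hm
    exact pair_cos i hm.1 (by omega)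
  rw [hsum, Finset.sum_sub_distrib, Finset.sum_const, Nat.card_Icc]
  have hcard : (K / 2 + 1 - 1) = K / 2 := by omega
  rw [hcard]
  have hKK : ((K/2 : ℕ):ℝ) * 2 = (K:ℝ) := by
    obtain ⟨r, hr⟩ := hKe
    have : K / 2 * 2 = K := by omega
    exact_mod_cast this
  have : ∑ m ∈ Finset.Icc 1 (K/2), 2 * Real.cos (2*π*(i.val:ℝ)/N) * Real.cos (2*π*(m:ℝ)/N)
      = Real.cos (2*π*(i.val:ℝ)/N) * ∑ m ∈ Finset.Icc 1 (K/2), 2 * Real.cos (2*π*(m:ℝ)/N) := by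
    rw [Finset.mul_sum]; apply Finset.sum_congr rfl; intros; ring
  rw [this]
  simp only [nsmul_eq_mul, Finset.sum_sub_distrib]
  rw [Finset.mul_sum]
  rw [← hKK]
  ring_nf
  congr 1
  rw [Finset.mul_sum]
  apply Finset.sum_congr rfl
  intro m hm
  ring_nf
end

section
variable {N K : ℕ} [NeZero N]

lemma adj_succ (hK : 2 ≤ K) (hN : K < N) (k : Fin N) : ringAdj N K k (k + 1) := by
  have h1 : k - (k + 1) = -((1:ℕ) : Fin N) := by push_cast; ring
  rw [ringAdj_iff, h1, neg_cast_val le_rfl (by omega)]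
  right
  omega

lemma eig_neg (hK : 2 ≤ K) (hN : K < N) {μ : ℝ} {v : Fin N → ℝ} (hv : v ≠ 0)
    (hsum : ∑ i, v i = 0) (heig : (ringCoupling N K).mulVec v = μ • v) : μ < 0 := by
  by_contra hμ
  push_neg at hμ
  obtain ⟨i, -, hmax⟩ := Finset.exists_max_image Finset.univ v ⟨0, Finset.mem_univ 0⟩
  replace hmax : ∀ j, v j ≤ v i := fun j => hmax j (Finset.mem_univ j)
  set M := v i with hM
  have hMpos : 0 < M := by
    by_contra hMp
    push_neg at hMp
    obtain ⟨j0, hj0⟩ : ∃ j, v j ≠ 0 := by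
      by_contra hall; push_neg at hall; exact hv (funext hall)
    have hlt : ∑ j, v j < ∑ _j : Fin N, (0:ℝ) := by
      apply Finset.sum_lt_sum (fun j _ => le_trans (hmax j) hMp)
      refine ⟨j0, Finset.mem_univ j0, lt_of_le_of_ne (le_trans (hmax j0) hMp) hj0⟩
    rw [hsum, Finset.sum_const, smul_zero] at hlt
    exact lt_irrefl _ hlt
  have step : ∀ k : Fin N, v k = M → v (k + 1) = M := by
    intro k hk
    by_contra hne
    have hlt : v (k + 1) < M := lt_of_le_of_ne (hmax _) hne
    have he : (ringCoupling N K).mulVec v k = μ * v k := by rw [heig]; rfl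
    rw [mulVec_expand hN, hk] at he
    set s := Finset.univ.filter (fun j => ringAdj N K k j) with hs
    have hmem : (k + 1) ∈ s := Finset.mem_filter.2 ⟨Finset.mem_univ _, adj_succ hK hN k⟩
    have hstrict : ∑ j ∈ s, v j < ∑ _j ∈ s, M :=
      Finset.sum_lt_sum (fun j _ => hmax j) ⟨k + 1, hmem, hlt⟩
    rw [Finset.sum_const, nsmul_eq_mul] at hstrict
    nlinarith [he, hstrict, hμ, hMpos]
  have key : ∀ m : ℕ, v (i + (m : Fin N)) = M := by
    intro m
    induction m with
    | zero => simpa using hM.symm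
    | succ m ih =>
        have e : ((m + 1 : ℕ) : Fin N) = (m : Fin N) + 1 := by push_cast; ring
        rw [e, ← add_assoc]
        exact step _ ih
  have hall : ∀ j, v j = M := by
    intro j
    have := key (j - i).val
    rwa [Fin.cast_val_eq_self, (by ring : i + (j - i) = j)] at this
  have hsum' : ∑ j, v j = (N : ℝ) * M := by
    rw [Finset.sum_congr rfl (fun j _ => hall j), Finset.sum_const, Finset.card_univ,
      Fintype.card_fin, nsmul_eq_mul]
  rw [hsum] at hsum'
  have hN0 : (0:ℝ) < N := by
    have := Nat.pos_of_ne_zero (NeZero.ne N); exact_mod_cast this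
  nlinarith
end

lemma sum_cos_zero {N : ℕ} (hN : 2 ≤ N) :
    ∑ j : Fin N, Real.cos (2*π*(j.val:ℝ)/N) = 0 := by
  have hN0 : (N:ℝ) ≠ 0 := by positivity
  set z : ℂ := Complex.exp (2 * (π:ℂ) * Complex.I / N) with hz
  have hNC : (N:ℂ) ≠ 0 := by exact_mod_cast hN0
  have hz1 : z ≠ 1 := by
    rw [hz, Ne, Complex.exp_eq_one_iff]
    rintro ⟨n, hn⟩
    have hI : (2 * (π:ℂ) * Complex.I) ≠ 0 := by
      simp [Complex.I_ne_zero, Real.pi_ne_zero]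
    have h1 : (2 * (π:ℂ) * Complex.I) * 1 = (2 * (π:ℂ) * Complex.I) * ((n:ℂ) * N) := by
      field_simp at hn
      linear_combination (2 * (π:ℂ) * Complex.I) * hn
    have h2 : (1:ℂ) = (n:ℂ) * N := mul_left_cancel₀ hI h1
    have h3 : (1:ℤ) = n * N := by exact_mod_cast h2
    rcases lt_trichotomy n 0 with h | h | h
    · nlinarith [h3, (by exact_mod_cast hN : (2:ℤ) ≤ N)]
    · simp [h] at h3
    · nlinarith [h3, (by exact_mod_cast hN : (2:ℤ) ≤ N)]
  have hzN : z ^ N = 1 := by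
    rw [hz, ← Complex.exp_nat_mul]
    have : (N:ℂ) * (2 * (π:ℂ) * Complex.I / N) = 2 * (π:ℂ) * Complex.I := by
      rw [mul_div_assoc']
      exact mul_div_cancel_left₀ _ hNC
    rw [this, Complex.exp_two_pi_mul_I]
  have hgeom : ∑ j ∈ Finset.range N, z ^ j = 0 := by
    rw [geom_sum_eq hz1, hzN]
    simp
  have hre : ∀ j : ℕ, Real.cos (2*π*(j:ℝ)/N) = (z ^ j).re := by
    intro j
    have : z ^ j = Complex.exp (((2*π*(j:ℝ)/N : ℝ) : ℂ) * Complex.I) := by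
      rw [hz, ← Complex.exp_nat_mul]
      congr 1
      push_cast
      field_simp
    rw [this, Complex.exp_ofReal_mul_I_re]
  calc ∑ j : Fin N, Real.cos (2*π*(j.val:ℝ)/N)
      = ∑ j ∈ Finset.range N, Real.cos (2*π*(j:ℝ)/N) :=
        Fin.sum_univ_eq_sum_range (fun j => Real.cos (2*π*(j:ℝ)/N)) N
    _ = ∑ j ∈ Finset.range N, (z ^ j).re := by
        exact Finset.sum_congr rfl (fun j _ => hre j)
    _ = (∑ j ∈ Finset.range N, z ^ j).re := by
        rw [Complex.re_sum]
    _ = 0 := by rw [hgeom]; simp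

noncomputable def muf (K N : ℕ) : ℝ :=
  ∑ m ∈ Finset.Icc 1 (K/2), (2*Real.cos (2*π*(m:ℝ)/N) - 2)

lemma muf_tendsto (K : ℕ) :
    Filter.Tendsto (fun N : ℕ => muf K N) Filter.atTop (nhds 0) := by
  have h0 : (0:ℝ) = ∑ _m ∈ Finset.Icc 1 (K/2), (0:ℝ) := by simp
  rw [h0]
  unfold muf
  apply tendsto_finset_sum
  intro m _
  have h1 : Filter.Tendsto (fun N : ℕ => 2*π*(m:ℝ)/N) Filter.atTop (nhds 0) :=
    tendsto_const_div_atTop_nhds_zero_nat (2*π*(m:ℝ))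
  have h2 : Filter.Tendsto (fun N : ℕ => Real.cos (2*π*(m:ℝ)/N)) Filter.atTop (nhds 1) := by
    have := (Real.continuous_cos.tendsto 0).comp h1
    rw [Real.cos_zero] at this
    exact this
  have h3 := (h2.const_mul 2).sub_const 2
  simpa using h3


/-- Fix an even integer `K ≥ 2`.  For `N > K` let `λ₂(N)` be the second-largest eigenvalue
of the coupling matrix `A_N = -L(G_N)` of the `K`-nearest-neighbor ring on `N` vertices,
i.e. the largest eigenvalue of `A_N` on the orthogonal complement of the all-ones vector.
Then `λ₂(N) < 0` for every `N` and `λ₂(N) → 0` as `N → ∞`.  Consequently, for any fixed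
constants `c > 0` and `d̄ < 0`, there exists `N̄` such that for all `N > N̄` the
synchronization criterion `c > |d̄| / |λ₂(N)|` fails. -/
theorem ring_second_eigenvalue_tendsto_zero_and_criterion_fails
    {K : ℕ} (hK : 2 ≤ K) (hKeven : Even K) (lam2 : ℕ → ℝ)
    (hlam2 : ∀ N : ℕ, K < N →
      IsGreatest {μ : ℝ | ∃ v : Fin N → ℝ, v ≠ 0 ∧ (∑ i, v i) = 0 ∧
        (ringCoupling N K).mulVec v = μ • v} (lam2 N)) :
    (∀ N : ℕ, K < N → lam2 N < 0) ∧
    Filter.Tendsto lam2 Filter.atTop (nhds 0) ∧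
    (∀ c d : ℝ, 0 < c → d < 0 →
      ∃ Nbar : ℕ, ∀ N : ℕ, Nbar < N → ¬ (|d| / |lam2 N| < c)) := by
  have part1 : ∀ N : ℕ, K < N → lam2 N < 0 := by
    intro N hN
    haveI : NeZero N := ⟨by omega⟩
    obtain ⟨v, hv, hsum, heig⟩ := (hlam2 N hN).1
    exact eig_neg hK hN hv hsum heig
  have lower : ∀ N : ℕ, K < N → muf K N ≤ lam2 N := by
    intro N hN
    haveI : NeZero N := ⟨by omega⟩
    apply (hlam2 N hN).2
    refine ⟨fun j => Real.cos (2*π*(j.val:ℝ)/N), ?_, ?_, ?_⟩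
    · intro h0
      have h1 := congrFun h0 (0 : Fin N)
      simp at h1
    · exact sum_cos_zero (by omega)
    · exact eigen_eq hK hKeven hN
  have part2 : Filter.Tendsto lam2 Filter.atTop (nhds 0) := by
    apply tendsto_of_tendsto_of_tendsto_of_le_of_le' (muf_tendsto K)
      (tendsto_const_nhds : Filter.Tendsto (fun _ : ℕ => (0:ℝ)) Filter.atTop (nhds 0))
    · filter_upwards [Filter.eventually_gt_atTop K] with N hN
      exact lower N hN
    · filter_upwards [Filter.eventually_gt_atTop K] with N hN
      exact (part1 N hN).le
  refine ⟨part1, part2, ?_⟩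
  intro c d hc hd
  have hdc : 0 < |d| / c := div_pos (abs_pos.2 (ne_of_lt hd)) hc
  obtain ⟨Nb, hNb⟩ := Metric.tendsto_atTop.1 part2 (|d|/c) hdc
  refine ⟨max Nb K, fun N hNN hcon => ?_⟩
  have hNK : K < N := lt_of_le_of_lt (le_max_right _ _) hNN
  have h1 : |lam2 N| < |d|/c := by
    have := hNb N (le_of_lt (lt_of_le_of_lt (le_max_left _ _) hNN))
    rwa [Real.dist_eq, sub_zero] at this
  have h2 : 0 < |lam2 N| := abs_pos.2 (ne_of_lt (part1 N hNK))
  rw [div_lt_iff₀ h2] at hcon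
  have h3 : c * |lam2 N| < c * (|d|/c) := (mul_lt_mul_iff_right₀ hc).2 h1
  rw [mul_div_cancel₀ _ (ne_of_gt hc)] at h3
  linarith
end

section
/- Let J : ℝ → ℝ^{n×n} be continuous, let Γ ∈ ℝ^{n×n} be a diagonal matrix, and suppose there exist a diagonal positive definite matrix P ∈ ℝ^{n×n}, constants d̄ < 0 and τ > 0 such that for every d ≤ d̄ and every t, (J(t) + dΓ)ᵀ P + P (J(t) + dΓ) ≼ −τ I (i.e. −τI minus the left side is positive semidefinite). Then for every a ≤ d̄, every differentiable solution ξ : [0,∞) → ℝⁿ of ξ̇(t) = (J(t) + a Γ) ξ(t) satisfies ‖ξ(t)‖ ≤ √(p_max/p_min) · e^{−τ t/(2 p_max)} ‖ξ(0)‖ for all t ≥ 0, where p_max and p_min are the largest and smallest diagonal entries of P; in particular ξ(t) → 0 exponentially. -/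
open Matrix

/-- Let `J : ℝ → ℝ^{n×n}` be continuous, `Γ ∈ ℝ^{n×n}` diagonal, and suppose there exist a
diagonal positive definite matrix `P = diagonal p`, constants `d̄ < 0` and `τ > 0` such
that for every `d ≤ d̄` and every `t`,
`(J(t) + dΓ)ᵀ P + P (J(t) + dΓ) ≼ -τ I` (i.e. `-τI` minus the left-hand side is
positive semidefinite).  Then for every `a ≤ d̄`, every differentiable solution
`ξ : [0,∞) → ℝⁿ` of `ξ̇(t) = (J(t) + a Γ) ξ(t)` satisfies
`‖ξ(t)‖ ≤ √(p_max / p_min) · e^{-τ t / (2 p_max)} ‖ξ(0)‖` for all `t ≥ 0` (Euclidean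
norm), where `p_max` and `p_min` are the largest and smallest diagonal entries of `P`;
in particular `ξ(t) → 0` exponentially. -/
theorem lyapunov_diagonal_exponential_stability
    {n : ℕ} (J : ℝ → Matrix (Fin n) (Fin n) ℝ) (hJ : Continuous J)
    (Γ : Matrix (Fin n) (Fin n) ℝ) (hΓ : Γ.IsDiag)
    (p : Fin n → ℝ) (hp : ∀ i, 0 < p i)
    (pmin pmax : ℝ)
    (hpmin : IsLeast (Set.range p) pmin) (hpmax : IsGreatest (Set.range p) pmax)
    (dbar τ : ℝ) (hdbar : dbar < 0) (hτ : 0 < τ)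
    (hLyap : ∀ d : ℝ, d ≤ dbar → ∀ t : ℝ,
      (-(τ • (1 : Matrix (Fin n) (Fin n) ℝ)) -
        ((J t + d • Γ)ᵀ * Matrix.diagonal p +
          Matrix.diagonal p * (J t + d • Γ))).PosSemidef) :
    ∀ a : ℝ, a ≤ dbar → ∀ ξ : ℝ → Fin n → ℝ,
      (∀ t : ℝ, 0 ≤ t → HasDerivAt ξ ((J t + a • Γ).mulVec (ξ t)) t) →
      ∀ t : ℝ, 0 ≤ t →
        Real.sqrt (∑ i, ξ t i ^ 2) ≤
          Real.sqrt (pmax / pmin) * Real.exp (-(τ * t) / (2 * pmax)) *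
            Real.sqrt (∑ i, ξ 0 i ^ 2) := by
  
  intro a ha ξ hξ t ht
  -- positivity of pmin, pmax
  obtain ⟨i₀, hi₀⟩ := hpmin.1
  obtain ⟨i₁, hi₁⟩ := hpmax.1
  have hpmin0 : 0 < pmin := hi₀ ▸ hp i₀
  have hpmax0 : 0 < pmax := hi₁ ▸ hp i₁
  set A : ℝ → Matrix (Fin n) (Fin n) ℝ := fun t => J t + a • Γ with hA
  set V : ℝ → ℝ := fun t => ∑ i, p i * ξ t i ^ 2 with hV
  -- derivative of V
  have hVd : ∀ s : ℝ, 0 ≤ s →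
      HasDerivAt V (∑ i, p i * (2 * ξ s i * (A s).mulVec (ξ s) i)) s := by
    intro s hs
    refine HasDerivAt.fun_sum fun i _ => ?_
    have h1 : HasDerivAt (fun u => ξ u i) ((A s).mulVec (ξ s) i) s :=
      (hasDerivAt_pi.mp (hξ s hs)) i
    have := ((h1.pow 2).const_mul (p i))
    simpa [mul_comm, mul_assoc, mul_left_comm] using this
  -- key derivative bound
  have key : ∀ s : ℝ, 0 ≤ s →
      (∑ i, p i * (2 * ξ s i * (A s).mulVec (ξ s) i)) ≤ -(τ / pmax) * V s := by
    intro s hs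
    have hps := (Matrix.posSemidef_iff_dotProduct_mulVec.mp (hLyap a ha s)).2 (ξ s)
    have hstar : star (ξ s) = ξ s := rfl
    rw [hstar] at hps
    set x := ξ s
    have hquad : dotProduct x (((A s)ᵀ * Matrix.diagonal p + Matrix.diagonal p * (A s)) *ᵥ x)
        = ∑ i, p i * (2 * x i * (A s).mulVec x i) := by
      simp only [add_mulVec, dotProduct_add, ← mulVec_mulVec]
      have h1 : dotProduct x ((A s)ᵀ *ᵥ (Matrix.diagonal p *ᵥ x))
          = ∑ i, p i * x i * (A s).mulVec x i := by
        rw [dotProduct_mulVec, vecMul_transpose]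
        simp [dotProduct, mulVec_diagonal, mul_comm, mul_assoc, mul_left_comm]
      have h2 : dotProduct x (Matrix.diagonal p *ᵥ ((A s) *ᵥ x))
          = ∑ i, p i * x i * (A s).mulVec x i := by
        simp [dotProduct, mulVec_diagonal, mul_comm, mul_assoc, mul_left_comm]
      rw [h1, h2, ← Finset.sum_add_distrib]
      apply Finset.sum_congr rfl; intro i _; ring
    have hexp : dotProduct x ((-(τ • (1 : Matrix (Fin n) (Fin n) ℝ)) -
        ((A s)ᵀ * Matrix.diagonal p + Matrix.diagonal p * (A s))) *ᵥ x)
        = -τ * (∑ i, x i ^ 2) - ∑ i, p i * (2 * x i * (A s).mulVec x i) := by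
      rw [sub_mulVec, dotProduct_sub, hquad]
      congr 1
      have hmv : (-(τ • (1 : Matrix (Fin n) (Fin n) ℝ))) *ᵥ x = fun i => -(τ * x i) := by
        funext i
        simp [neg_mulVec, smul_mulVec, one_mulVec]
      rw [hmv]
      simp only [dotProduct]
      rw [neg_mul, Finset.mul_sum, ← Finset.sum_neg_distrib]
      exact Finset.sum_congr rfl fun i _ => by ring
    rw [hexp] at hps
    have h3 : ∑ i, p i * (2 * x i * (A s).mulVec x i) ≤ -τ * ∑ i, x i ^ 2 := by
      linarith
    have h4 : V s ≤ pmax * ∑ i, x i ^ 2 := by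
      rw [Finset.mul_sum]
      apply Finset.sum_le_sum
      intro i _
      exact mul_le_mul_of_nonneg_right (hpmax.2 ⟨i, rfl⟩) (sq_nonneg _)
    have h5 : -(τ / pmax) * V s ≥ -(τ / pmax) * (pmax * ∑ i, x i ^ 2) := by
      apply mul_le_mul_of_nonpos_left h4
      exact neg_nonpos.mpr (by positivity)
    have h6 : -(τ / pmax) * (pmax * ∑ i, x i ^ 2) = -τ * ∑ i, x i ^ 2 := by
      field_simp
    linarith
  -- g = V * exp(τ s / pmax) is antitone on [0,∞)
  set g : ℝ → ℝ := fun s => V s * Real.exp (τ * s / pmax) with hg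
  have hgd : ∀ s ∈ Set.Ici (0:ℝ), HasDerivAt g
      ((∑ i, p i * (2 * ξ s i * (A s).mulVec (ξ s) i)) * Real.exp (τ * s / pmax)
        + V s * (Real.exp (τ * s / pmax) * (τ / pmax))) s := by
    intro s hs
    have he : HasDerivAt (fun u => Real.exp (τ * u / pmax)) (Real.exp (τ * s / pmax) * (τ / pmax)) s := by
      have : HasDerivAt (fun u : ℝ => τ * u / pmax) (τ / pmax) s := by
        simpa using ((hasDerivAt_id s).const_mul τ).div_const pmax
      exact (Real.hasDerivAt_exp _).comp s this
    exact (hVd s hs).mul he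
  have hanti : AntitoneOn g (Set.Ici (0:ℝ)) := by
    apply antitoneOn_of_deriv_nonpos (convex_Ici 0)
    · intro s hs
      exact ((hgd s hs).continuousAt).continuousWithinAt
    · intro s hs
      rw [interior_Ici] at hs
      exact ((hgd s (Set.mem_Ici.mpr (le_of_lt (Set.mem_Ioi.mp hs)))).differentiableAt).differentiableWithinAt
    · intro s hs
      rw [interior_Ici] at hs
      rw [((hgd s (Set.mem_Ici.mpr (le_of_lt (Set.mem_Ioi.mp hs)))).deriv)]
      have hk := key s (le_of_lt hs)
      have hepos : (0:ℝ) < Real.exp (τ * s / pmax) := Real.exp_pos _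
      have : (∑ i, p i * (2 * ξ s i * (A s).mulVec (ξ s) i)) * Real.exp (τ * s / pmax)
          ≤ (-(τ / pmax) * V s) * Real.exp (τ * s / pmax) :=
        mul_le_mul_of_nonneg_right hk hepos.le
      nlinarith
  have hgle : g t ≤ g 0 := hanti Set.self_mem_Ici ht ht
  -- unfold
  have hV0 : V t * Real.exp (τ * t / pmax) ≤ V 0 := by
    simpa [hg] using hgle
  have hVt : V t ≤ V 0 * Real.exp (-(τ * t) / pmax) := by
    have he : (0:ℝ) < Real.exp (τ * t / pmax) := Real.exp_pos _
    rw [neg_div, Real.exp_neg, ← div_eq_mul_inv, le_div_iff₀ he]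
    exact hV0
  -- final chain
  have hlow : pmin * ∑ i, ξ t i ^ 2 ≤ V t := by
    rw [Finset.mul_sum]
    apply Finset.sum_le_sum
    intro i _
    exact mul_le_mul_of_nonneg_right (hpmin.2 ⟨i, rfl⟩) (sq_nonneg _)
  have hhigh : V 0 ≤ pmax * ∑ i, ξ 0 i ^ 2 := by
    rw [Finset.mul_sum]
    apply Finset.sum_le_sum
    intro i _
    exact mul_le_mul_of_nonneg_right (hpmax.2 ⟨i, rfl⟩) (sq_nonneg _)
  have hfin : ∑ i, ξ t i ^ 2 ≤
      (pmax / pmin) * Real.exp (-(τ * t) / pmax) * ∑ i, ξ 0 i ^ 2 := by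
    have he : (0:ℝ) < Real.exp (-(τ * t) / pmax) := Real.exp_pos _
    have h1 : V t ≤ (pmax * ∑ i, ξ 0 i ^ 2) * Real.exp (-(τ * t) / pmax) :=
      hVt.trans (mul_le_mul_of_nonneg_right hhigh he.le)
    have h2 : pmin * ∑ i, ξ t i ^ 2 ≤ (pmax * ∑ i, ξ 0 i ^ 2) * Real.exp (-(τ * t) / pmax) :=
      hlow.trans h1
    rw [div_mul_eq_mul_div, div_mul_eq_mul_div, le_div_iff₀ hpmin0]
    nlinarith
  calc Real.sqrt (∑ i, ξ t i ^ 2)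
      ≤ Real.sqrt ((pmax / pmin) * Real.exp (-(τ * t) / pmax) * ∑ i, ξ 0 i ^ 2) :=
        Real.sqrt_le_sqrt hfin
    _ = Real.sqrt (pmax / pmin) * Real.exp (-(τ * t) / (2 * pmax)) *
          Real.sqrt (∑ i, ξ 0 i ^ 2) := by
        rw [Real.sqrt_mul (by positivity), Real.sqrt_mul (by positivity)]
        congr 1
        congr 1
        rw [← Real.exp_half]
        congr 1
        rw [div_div]; ring
end

section
/- Let f : ℝⁿ → ℝⁿ be Lipschitz continuous with Lipschitz constant L_f > 0, and let x̄ ∈ ℝⁿ satisfy f(x̄) = 0. Let M ∈ ℝ^{m×m} be symmetric with −M positive definite, and let μ > 0 denote the smallest eigenvalue of −M. Let c > L_f/μ, and let x_1, …, x_m : [0,∞) → ℝⁿ be differentiable functions satisfying ẋ_i(t) = f(x_i(t)) + c ∑_{j=1}^m M_{ij} (x_j(t) − x̄) for all i and t ≥ 0. Then, writing e(t) := (x_1(t) − x̄, …, x_m(t) − x̄) ∈ ℝ^{mn}, one has ‖e(t)‖ ≤ e^{(L_f − cμ) t} ‖e(0)‖ for all t ≥ 0; in particular every x_i(t) converges exponentially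 to the homogeneous stationary state x̄. -/
open Matrix in
lemma quad_lower {m : ℕ} (N : Matrix (Fin m) (Fin m) ℝ) (hN : N.IsHermitian) (μ : ℝ)
    (hlb : ∀ ν : ℝ, (∃ v : Fin m → ℝ, v ≠ 0 ∧ N.mulVec v = ν • v) → μ ≤ ν)
    (v : Fin m → ℝ) : μ * ∑ i, v i ^ 2 ≤ v ⬝ᵥ N.mulVec v := by
  set A : Matrix (Fin m) (Fin m) ℝ := N - μ • 1 with hA
  have h1h : ((μ : ℝ) • (1 : Matrix (Fin m) (Fin m) ℝ)).IsHermitian := by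
    simp [Matrix.IsHermitian]
  have hAh : A.IsHermitian := hN.sub h1h
  have hEV : ∀ i, 0 ≤ hAh.eigenvalues i := by
    intro i
    have hv := hAh.mulVec_eigenvectorBasis i
    set w : Fin m → ℝ := ⇑(hAh.eigenvectorBasis i) with hw
    have hw0 : w ≠ 0 := by
      have h2 := hAh.eigenvectorBasis.orthonormal.ne_zero i
      intro h
      apply h2
      ext k
      exact congrFun h k
    have hNw : N.mulVec w = (hAh.eigenvalues i + μ) • w := by
      have h3 : N.mulVec w = A.mulVec w + μ • w := by
        simp [hA, Matrix.sub_mulVec, Matrix.smul_mulVec, Matrix.one_mulVec]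
      have h4 : A.mulVec w = hAh.eigenvalues i • w := by simpa using hv
      rw [h3, h4, add_smul]
    have := hlb _ ⟨w, hw0, hNw⟩
    linarith
  have hps : A.PosSemidef := hAh.posSemidef_iff_eigenvalues_nonneg.mpr hEV
  have h0 := hps.dotProduct_mulVec_nonneg v
  have hsv : star v = v := by simp
  rw [hsv, hA, Matrix.sub_mulVec, Matrix.smul_mulVec, Matrix.one_mulVec,
    dotProduct_sub, dotProduct_smul] at h0
  have hvv : v ⬝ᵥ v = ∑ i, v i ^ 2 := by
    simp [dotProduct, pow_two]
  rw [hvv] at h0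
  simp only [smul_eq_mul] at h0
  linarith


/-- Let `f : ℝⁿ → ℝⁿ` be Lipschitz continuous (w.r.t. the Euclidean norm) with Lipschitz
constant `L_f > 0`, and let `x̄ ∈ ℝⁿ` satisfy `f(x̄) = 0`.  Let `M ∈ ℝ^{m×m}` be
symmetric with `-M` positive definite, and let `μ > 0` denote the smallest eigenvalue
of `-M`.  Let `c > L_f/μ`, and let `x 1, …, x m : [0,∞) → ℝⁿ` be differentiable
functions satisfying `ẋᵢ(t) = f(xᵢ(t)) + c ∑ⱼ Mᵢⱼ (xⱼ(t) - x̄)` for all `i` and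
`t ≥ 0`.  Then, writing `e(t) := (x₁(t) - x̄, …, x_m(t) - x̄) ∈ ℝ^{mn}`, one has
`‖e(t)‖ ≤ e^{(L_f - cμ) t} ‖e(0)‖` for all `t ≥ 0` (Euclidean norms); in particular
every `xᵢ(t)` converges exponentially to the homogeneous stationary state `x̄`. -/
theorem pinning_control_exponential_stabilization
    {n m : ℕ} (f : (Fin n → ℝ) → Fin n → ℝ) (Lf : ℝ) (hLf : 0 < Lf)
    (hf : ∀ x y : Fin n → ℝ,
      Real.sqrt (∑ k, (f x k - f y k) ^ 2) ≤ Lf * Real.sqrt (∑ k, (x k - y k) ^ 2))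
    (xbar : Fin n → ℝ) (hxbar : f xbar = 0)
    (M : Matrix (Fin m) (Fin m) ℝ) (hM : M.IsSymm) (hMneg : (-M).PosDef)
    (μ : ℝ) (hμpos : 0 < μ)
    (hμ : IsLeast {ν : ℝ | ∃ v : Fin m → ℝ, v ≠ 0 ∧ (-M).mulVec v = ν • v} μ)
    (c : ℝ) (hc : Lf / μ < c)
    (x : Fin m → ℝ → Fin n → ℝ)
    (hode : ∀ (i : Fin m) (t : ℝ), 0 ≤ t →
      HasDerivAt (x i) (f (x i t) + c • ∑ j, M i j • (x j t - xbar)) t) :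
    ∀ t : ℝ, 0 ≤ t →
      Real.sqrt (∑ i, ∑ k, (x i t k - xbar k) ^ 2) ≤
        Real.exp ((Lf - c * μ) * t) * Real.sqrt (∑ i, ∑ k, (x i 0 k - xbar k) ^ 2) := by
  have hcpos : 0 < c := lt_trans (div_pos hLf hμpos) hc
  have hcμ : Lf < c * μ := (div_lt_iff₀ hμpos).mp hc
  -- abbreviations
  set a : ℝ := Lf - c * μ with ha
  set V : ℝ → ℝ := fun t => ∑ i, ∑ k, (x i t k - xbar k) ^ 2 with hV
  set d : Fin m → ℝ → Fin n → ℝ :=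
    fun i t => f (x i t) + c • ∑ j, M i j • (x j t - xbar) with hd
  set D : ℝ → ℝ := fun t => ∑ i, ∑ k, 2 * (x i t k - xbar k) * d i t k with hD
  have hVnonneg : ∀ t, 0 ≤ V t := fun t =>
    Finset.sum_nonneg fun i _ => Finset.sum_nonneg fun k _ => sq_nonneg _
  -- derivative of V
  have hVderiv : ∀ t : ℝ, 0 ≤ t → HasDerivAt V (D t) t := by
    intro t ht
    apply HasDerivAt.fun_sum
    intro i _
    apply HasDerivAt.fun_sum
    intro k _
    have h1 : HasDerivAt (fun s => x i s k) (d i t k) t :=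
      hasDerivAt_pi.mp (hode i t ht) k
    have h2 := ((h1.sub_const (xbar k)).fun_pow 2)
    refine h2.congr_deriv ?_
    ring
  -- key inequality D t ≤ 2 a V t
  have hkey : ∀ t : ℝ, 0 ≤ t → D t ≤ 2 * a * V t := by
    intro t ht
    have hdk : ∀ (i : Fin m) (k : Fin n),
        d i t k = f (x i t) k + c * ∑ j, M i j * (x j t k - xbar k) := by
      intro i k
      simp [hd, Finset.sum_apply]
    have hpt : ∀ (i : Fin m) (k : Fin n),
        2 * (x i t k - xbar k) * d i t k
          = 2 * ((x i t k - xbar k) * f (x i t) k)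
            + 2 * c * ((x i t k - xbar k) * ∑ j, M i j * (x j t k - xbar k)) := by
      intro i k
      rw [hdk]
      ring
    have hDsplit : D t = 2 * (∑ i, ∑ k, (x i t k - xbar k) * f (x i t) k)
        + 2 * c * (∑ k, ∑ i, (x i t k - xbar k) * ∑ j, M i j * (x j t k - xbar k)) := by
      simp only [hD]
      rw [Finset.sum_congr rfl fun i (_ : i ∈ Finset.univ) =>
        Finset.sum_congr rfl fun k (_ : k ∈ Finset.univ) => hpt i k]
      simp only [Finset.sum_add_distrib, ← Finset.mul_sum]
      congr 1
      rw [Finset.sum_comm]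
    -- first term bound
    have hterm1 : ∀ i : Fin m, (∑ k, (x i t k - xbar k) * f (x i t) k)
        ≤ Lf * ∑ k, (x i t k - xbar k) ^ 2 := by
      intro i
      have hcs := Real.sum_mul_le_sqrt_mul_sqrt Finset.univ
        (fun k => x i t k - xbar k) (fun k => f (x i t) k)
      have hfe : Real.sqrt (∑ k, f (x i t) k ^ 2)
          ≤ Lf * Real.sqrt (∑ k, (x i t k - xbar k) ^ 2) := by
        have := hf (x i t) xbar
        simpa [hxbar] using this
      have hs0 : 0 ≤ Real.sqrt (∑ k, (x i t k - xbar k) ^ 2) := Real.sqrt_nonneg _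
      calc (∑ k, (x i t k - xbar k) * f (x i t) k)
          ≤ Real.sqrt (∑ k, (x i t k - xbar k) ^ 2) * Real.sqrt (∑ k, f (x i t) k ^ 2) := hcs
        _ ≤ Real.sqrt (∑ k, (x i t k - xbar k) ^ 2) *
            (Lf * Real.sqrt (∑ k, (x i t k - xbar k) ^ 2)) := by
            exact mul_le_mul_of_nonneg_left hfe hs0
        _ = Lf * (Real.sqrt (∑ k, (x i t k - xbar k) ^ 2)) ^ 2 := by ring
        _ = Lf * ∑ k, (x i t k - xbar k) ^ 2 := by
            rw [Real.sq_sqrt (Finset.sum_nonneg fun k _ => sq_nonneg _)]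
    -- second term bound
    have hterm2 : ∀ k : Fin n, (∑ i, (x i t k - xbar k) * ∑ j, M i j * (x j t k - xbar k))
        ≤ -μ * ∑ i, (x i t k - xbar k) ^ 2 := by
      intro k
      have hq := quad_lower (-M) hMneg.1 μ (fun ν hν => hμ.2 hν)
        (fun i => x i t k - xbar k)
      have hdot : dotProduct (fun i => x i t k - xbar k) ((-M).mulVec (fun i => x i t k - xbar k))
          = -(∑ i, (x i t k - xbar k) * ∑ j, M i j * (x j t k - xbar k)) := by
        simp [dotProduct, Matrix.mulVec, Matrix.neg_apply, Finset.mul_sum,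
          ← Finset.sum_neg_distrib]
      rw [hdot] at hq
      linarith
    have h1 : (∑ i, ∑ k, (x i t k - xbar k) * f (x i t) k) ≤ Lf * V t := by
      rw [hV, Finset.mul_sum]
      exact Finset.sum_le_sum fun i _ => hterm1 i
    have h2 : (∑ k, ∑ i, (x i t k - xbar k) * ∑ j, M i j * (x j t k - xbar k))
        ≤ -μ * V t := by
      have hVswap : V t = ∑ k, ∑ i, (x i t k - xbar k) ^ 2 := Finset.sum_comm
      rw [hVswap, Finset.mul_sum]
      exact Finset.sum_le_sum fun k _ => hterm2 k
    have h2' := mul_le_mul_of_nonneg_left h2 (le_of_lt hcpos)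
    calc D t = 2 * (∑ i, ∑ k, (x i t k - xbar k) * f (x i t) k)
          + 2 * c * (∑ k, ∑ i, (x i t k - xbar k) * ∑ j, M i j * (x j t k - xbar k)) := hDsplit
      _ ≤ 2 * (Lf * V t) + 2 * (c * (-μ * V t)) := by linarith
      _ = 2 * a * V t := by rw [ha]; ring
  -- Gronwall via antitone auxiliary function
  set g : ℝ → ℝ := fun t => Real.exp (-(2 * a) * t) * V t with hg
  have hgderiv : ∀ t : ℝ, 0 ≤ t →
      HasDerivAt g (Real.exp (-(2 * a) * t) * (D t - 2 * a * V t)) t := by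
    intro t ht
    have h1 : HasDerivAt (fun s : ℝ => -(2 * a) * s) (-(2 * a)) t := by
      simpa using (hasDerivAt_id t).const_mul (-(2 * a))
    have he : HasDerivAt (fun s : ℝ => Real.exp (-(2 * a) * s))
        (Real.exp (-(2 * a) * t) * -(2 * a)) t :=
      (Real.hasDerivAt_exp (-(2 * a) * t)).comp t h1
    have := he.fun_mul (hVderiv t ht)
    refine this.congr_deriv ?_
    ring
  have hanti : AntitoneOn g (Set.Ici 0) := by
    apply antitoneOn_of_deriv_nonpos (convex_Ici 0)
    · intro t ht
      exact (hgderiv t ht).continuousAt.continuousWithinAt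
    · intro t ht
      rw [interior_Ici] at ht
      exact (hgderiv t (le_of_lt ht)).differentiableAt.differentiableWithinAt
    · intro t ht
      rw [interior_Ici] at ht
      rw [(hgderiv t (le_of_lt ht)).deriv]
      have hk := hkey t (le_of_lt ht)
      have := Real.exp_nonneg (-(2 * a) * t)
      nlinarith
  intro t ht
  have hgle : g t ≤ g 0 := hanti (Set.self_mem_Ici) ht ht
  have hVle : V t ≤ Real.exp (2 * a * t) * V 0 := by
    have hg0 : g 0 = V 0 := by simp [hg]
    have hgt : g t = Real.exp (-(2 * a) * t) * V t := rfl
    rw [hg0, hgt] at hgle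
    have hepos : 0 < Real.exp (-(2 * a) * t) := Real.exp_pos _
    calc V t = Real.exp (2 * a * t) * (Real.exp (-(2 * a) * t) * V t) := by
          rw [← mul_assoc, ← Real.exp_add]; ring_nf; simp
      _ ≤ Real.exp (2 * a * t) * V 0 := by
          exact mul_le_mul_of_nonneg_left hgle (le_of_lt (Real.exp_pos _))
  have hsq : Real.sqrt (V t) ≤ Real.sqrt (Real.exp (2 * a * t) * V 0) :=
    Real.sqrt_le_sqrt hVle
  have hrw : Real.sqrt (Real.exp (2 * a * t) * V 0)
      = Real.exp (a * t) * Real.sqrt (V 0) := by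
    rw [Real.sqrt_mul (Real.exp_nonneg _)]
    congr 1
    rw [show (2 : ℝ) * a * t = a * t + a * t by ring, Real.exp_add,
      ← pow_two, Real.sqrt_sq (Real.exp_nonneg _)]
  rw [hrw] at hsq
  exact hsq
end
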